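/- Let A be a noetherian local graded ring (a Z-graded commutative ring with a unique maximal homogeneous ideal). If A is good (homogeneous primes are determined by their degree-0 parts), then A is either quasi-standard (contains a homogeneous unit of positive degree) or quasi-trivial (every homogeneous element of nonzero degree is nilpotent). -/

import Mathlib

open DirectSum ENNReal NNReal

namespace Stmt13

lemma ennreal_eq_top_of_nat_le {x : ℝ≥0∞} (h : ∀ n : ℕ, (n : ℝ≥0∞) ≤ x) : x = ⊤ := by
  by_contra hx
  obtain ⟨n, hn⟩ := ENNReal.exists_nat_gt hx
  exact absurd (h n) (not_le.mpr hn)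

variable {D : Type*} [CommRing D] [IsDomain D]

/-- The divisibility staircase set. -/
def sSet (α x : D) : Set (ℕ × ℕ) := {p | 0 < p.2 ∧ α ^ p.1 ∣ x ^ p.2}

/-- The divisibility slope. -/
noncomputable def slope (α x : D) : ℝ≥0∞ :=
  ⨆ p ∈ sSet α x, (p.1 : ℝ≥0∞) / (p.2 : ℝ≥0∞)

lemma base_mem (α x : D) : ((0, 1) : ℕ × ℕ) ∈ sSet α x := ⟨one_pos, by simp⟩

lemma ratio_le_slope {α x : D} {p : ℕ × ℕ} (hp : p ∈ sSet α x) :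
    (p.1 : ℝ≥0∞) / (p.2 : ℝ≥0∞) ≤ slope α x :=
  le_iSup₂_of_le p hp le_rfl

lemma slope_ge_of_dvd {α x : D} {i n : ℕ} (hn : 0 < n) (h : α ^ i ∣ x ^ n) :
    (i : ℝ≥0∞) / (n : ℝ≥0∞) ≤ slope α x :=
  ratio_le_slope (α := α) (x := x) (p := (i, n)) ⟨hn, h⟩

lemma slope_zero (α : D) : slope α 0 = ⊤ := by
  apply ennreal_eq_top_of_nat_le
  intro n
  have := slope_ge_of_dvd (α := α) (x := (0 : D)) (i := n) (n := 1) one_pos (by simp)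
  simpa using this

lemma slope_le_of_forall {α x : D} {c : ℝ≥0∞}
    (h : ∀ p : ℕ × ℕ, p ∈ sSet α x → (p.1 : ℝ≥0∞) / (p.2 : ℝ≥0∞) ≤ c) :
    slope α x ≤ c := by
  exact iSup₂_le h

lemma slope_pow {α x : D} {k : ℕ} (hk : 0 < k) :
    slope α (x ^ k) = (k : ℝ≥0∞) * slope α x := by
  have hk0 : (k : ℝ≥0∞) ≠ 0 := by exact_mod_cast hk.ne'
  have hkt : (k : ℝ≥0∞) ≠ ⊤ := ENNReal.natCast_ne_top k
  apply le_antisymm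
  · apply slope_le_of_forall
    rintro ⟨i, n⟩ ⟨hn, hdvd⟩
    have h2 : α ^ i ∣ x ^ (k * n) := by
      rwa [← pow_mul] at hdvd
    have h3 : (i : ℝ≥0∞) / ((k * n : ℕ) : ℝ≥0∞) ≤ slope α x :=
      slope_ge_of_dvd (Nat.mul_pos hk hn) h2
    have h4 : (i : ℝ≥0∞) / (n : ℝ≥0∞) = (k : ℝ≥0∞) * ((i : ℝ≥0∞) / ((k : ℝ≥0∞) * (n : ℝ≥0∞))) := by
      rw [← mul_div_assoc, ENNReal.mul_div_mul_left _ _ hk0 hkt]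
    rw [h4]
    calc (k : ℝ≥0∞) * ((i : ℝ≥0∞) / ((k : ℝ≥0∞) * (n : ℝ≥0∞)))
        = (k : ℝ≥0∞) * ((i : ℝ≥0∞) / ((k * n : ℕ) : ℝ≥0∞)) := by push_cast; ring_nf
      _ ≤ (k : ℝ≥0∞) * slope α x := by gcongr
  · unfold slope
    simp_rw [ENNReal.mul_iSup]
    apply iSup₂_le
    rintro ⟨i, n⟩ ⟨hn, hdvd⟩
    have h2 : α ^ (i * k) ∣ (x ^ k) ^ n := by
      rw [pow_mul, ← pow_mul x k n, mul_comm k n, pow_mul]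
      exact pow_dvd_pow_of_dvd hdvd k
    have h3 := slope_ge_of_dvd (α := α) (x := x ^ k) hn h2
    refine le_trans ?_ h3
    push_cast
    rw [mul_comm (i : ℝ≥0∞) (k : ℝ≥0∞), mul_div_assoc]


lemma one_le_slope_self (α : D) : 1 ≤ slope α α := by
  have := slope_ge_of_dvd (α := α) (x := α) (i := 1) (n := 1) one_pos dvd_rfl
  simpa using this

lemma slope_mul_le (α x y : D) : slope α x + slope α y ≤ slope α (x * y) := by
  unfold slope
  rw [ENNReal.biSup_add' ⟨_, base_mem α x⟩]
  apply iSup₂_le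
  rintro ⟨i, n⟩ ⟨hn, hdx⟩
  rw [ENNReal.add_biSup' ⟨_, base_mem α y⟩]
  apply iSup₂_le
  rintro ⟨j, m⟩ ⟨hm, hdy⟩
  have hdx' : α ^ (i * m) ∣ x ^ (n * m) := by
    rw [pow_mul, pow_mul]; exact pow_dvd_pow_of_dvd hdx m
  have hdy' : α ^ (j * n) ∣ y ^ (n * m) := by
    rw [mul_comm n m, pow_mul, pow_mul]
    exact pow_dvd_pow_of_dvd hdy n
  have hdvd : α ^ (i * m + j * n) ∣ (x * y) ^ (n * m) := by
    rw [mul_pow, pow_add]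
    exact mul_dvd_mul hdx' hdy'
  have h3 := slope_ge_of_dvd (α := α) (x := x * y) (Nat.mul_pos hn hm) hdvd
  refine le_trans (le_of_eq ?_) h3
  have hn0 : (n : ℝ≥0∞) ≠ 0 := by exact_mod_cast hn.ne'
  have hnt : (n : ℝ≥0∞) ≠ ⊤ := ENNReal.natCast_ne_top n
  have hm0 : (m : ℝ≥0∞) ≠ 0 := by exact_mod_cast hm.ne'
  have hmt : (m : ℝ≥0∞) ≠ ⊤ := ENNReal.natCast_ne_top m
  push_cast
  rw [ENNReal.add_div]
  congr 1
  · rw [mul_comm (i : ℝ≥0∞) (m : ℝ≥0∞), mul_comm (n : ℝ≥0∞) (m : ℝ≥0∞),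
      ENNReal.mul_div_mul_left _ _ hm0 hmt]
  · rw [mul_comm (j : ℝ≥0∞) (n : ℝ≥0∞), ENNReal.mul_div_mul_left _ _ hn0 hnt]

lemma slope_le_of_dvd_pow {α x : D} {s : ℕ} (hα0 : α ≠ 0) (hαu : ¬ IsUnit α)
    (h : x ∣ α ^ s) : slope α x ≤ (s : ℝ≥0∞) := by
  apply slope_le_of_forall
  rintro ⟨i, n⟩ ⟨hn, hdvd⟩
  have key : i ≤ s * n := by
    by_contra hlt
    push_neg at hlt
    obtain ⟨g, hg⟩ := h
    obtain ⟨c, hc⟩ := hdvd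
    have he : α ^ (s * n) = α ^ (s * n) * (α ^ (i - s * n) * (c * g ^ n)) := by
      calc α ^ (s * n) = (α ^ s) ^ n := pow_mul α s n
        _ = x ^ n * g ^ n := by rw [hg, mul_pow]
        _ = α ^ i * c * g ^ n := by rw [hc]
        _ = α ^ (s * n + (i - s * n)) * c * g ^ n := by rw [Nat.add_sub_cancel' hlt.le]
        _ = α ^ (s * n) * (α ^ (i - s * n) * (c * g ^ n)) := by rw [pow_add]; ring
    have h1 : α ^ (s * n) ≠ 0 := pow_ne_zero _ hα0
    have h2 : (1 : D) = α ^ (i - s * n) * (c * g ^ n) := by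
      apply mul_left_cancel₀ h1
      rw [mul_one]
      exact he
    have h3 : α ∣ 1 := by
      rw [h2]
      have : α ∣ α ^ (i - s * n) := dvd_pow_self α (by omega)
      exact this.mul_right _
    exact hαu (isUnit_of_dvd_one h3)
  have hn0 : (n : ℝ≥0∞) ≠ 0 := by exact_mod_cast hn.ne'
  have hnt : (n : ℝ≥0∞) ≠ ⊤ := ENNReal.natCast_ne_top n
  rw [ENNReal.div_le_iff hn0 hnt]
  exact_mod_cast key


lemma floor_dvd {α x : D} {i n : ℕ} (h : α ^ i ∣ x ^ n) (k : ℕ) :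
    α ^ (i * (k / n)) ∣ x ^ k := by
  rcases Nat.eq_zero_or_pos n with hn | hn
  · subst hn; simp
  have hx : x ^ k = (x ^ n) ^ (k / n) * x ^ (k % n) := by
    rw [← pow_mul, ← pow_add, Nat.div_add_mod]
  rw [hx, pow_mul]
  exact Dvd.dvd.mul_right (pow_dvd_pow_of_dvd h _) _

lemma exists_pair_of_lt {α x : D} {r : ℝ≥0∞} (h : r < slope α x) :
    ∃ i n : ℕ, 0 < n ∧ α ^ i ∣ x ^ n ∧ r < (i : ℝ≥0∞) / (n : ℝ≥0∞) := by
  unfold slope at h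
  rw [lt_iSup_iff] at h
  obtain ⟨p, hp⟩ := h
  rw [lt_iSup_iff] at hp
  obtain ⟨hmem, hlt⟩ := hp
  exact ⟨p.1, p.2, hmem.1, hmem.2, hlt⟩

lemma nat_div_add_div {a b n : ℕ} (hn : 0 < n) :
    (a + b) / n ≤ a / n + b / n + 1 := by
  have h1 := Nat.div_add_mod a n
  have h2 := Nat.div_add_mod b n
  have h3 : a % n < n := Nat.mod_lt _ hn
  have h4 : b % n < n := Nat.mod_lt _ hn
  have : (a + b) / n < a / n + b / n + 2 := by
    apply Nat.div_lt_of_lt_mul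
    have : n * (a / n + b / n + 2) = n * (a/n) + n * (b/n) + n + n := by ring
    omega
  omega

lemma slope_add {α x y : D} {c : ℝ≥0∞} (hx : c ≤ slope α x) (hy : c ≤ slope α y) :
    c ≤ slope α (x + y) := by
  refine ENNReal.le_of_forall_nnreal_lt ?_
  intro r hr
  obtain ⟨i₁, n₁, hn₁, hd₁, hr₁⟩ := exists_pair_of_lt (lt_of_lt_of_le hr hx)
  obtain ⟨i₂, n₂, hn₂, hd₂, hr₂⟩ := exists_pair_of_lt (lt_of_lt_of_le hr hy)
  -- common denominator
  set n := n₁ * n₂ with hn_def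
  have hn : 0 < n := Nat.mul_pos hn₁ hn₂
  have hd₁' : α ^ (i₁ * n₂) ∣ x ^ n := by
    rw [hn_def, pow_mul, pow_mul]
    exact pow_dvd_pow_of_dvd hd₁ n₂
  have hd₂' : α ^ (i₂ * n₁) ∣ y ^ n := by
    rw [hn_def, mul_comm n₁ n₂, pow_mul, pow_mul]
    exact pow_dvd_pow_of_dvd hd₂ n₁
  have hr₁' : r < ((i₁ * n₂ : ℕ) : ℝ≥0∞) / (n : ℝ≥0∞) := by
    have hn₂0 : (n₂ : ℝ≥0∞) ≠ 0 := by exact_mod_cast hn₂.ne'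
    have hn₂t : (n₂ : ℝ≥0∞) ≠ ⊤ := ENNReal.natCast_ne_top n₂
    have : ((i₁ * n₂ : ℕ) : ℝ≥0∞) / (n : ℝ≥0∞) = (i₁ : ℝ≥0∞) / (n₁ : ℝ≥0∞) := by
      rw [hn_def]
      push_cast
      rw [mul_comm (i₁ : ℝ≥0∞) (n₂ : ℝ≥0∞), mul_comm (n₁ : ℝ≥0∞) (n₂ : ℝ≥0∞),
        ENNReal.mul_div_mul_left _ _ hn₂0 hn₂t]
    rw [this]; exact hr₁
  have hr₂' : r < ((i₂ * n₁ : ℕ) : ℝ≥0∞) / (n : ℝ≥0∞) := by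
    have hn₁0 : (n₁ : ℝ≥0∞) ≠ 0 := by exact_mod_cast hn₁.ne'
    have hn₁t : (n₁ : ℝ≥0∞) ≠ ⊤ := ENNReal.natCast_ne_top n₁
    have : ((i₂ * n₁ : ℕ) : ℝ≥0∞) / (n : ℝ≥0∞) = (i₂ : ℝ≥0∞) / (n₂ : ℝ≥0∞) := by
      rw [hn_def, mul_comm n₁ n₂]
      push_cast
      rw [mul_comm (i₂ : ℝ≥0∞) (n₁ : ℝ≥0∞), mul_comm (n₂ : ℝ≥0∞) (n₁ : ℝ≥0∞),
        ENNReal.mul_div_mul_left _ _ hn₁0 hn₁t]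
    rw [this]; exact hr₂
  set m := min (i₁ * n₂) (i₂ * n₁) with hm_def
  have hd₁'' : α ^ m ∣ α ^ (i₁ * n₂) := pow_dvd_pow α (min_le_left _ _)
  have hd₂'' : α ^ m ∣ α ^ (i₂ * n₁) := pow_dvd_pow α (min_le_right _ _)
  have hrm : r < (m : ℝ≥0∞) / (n : ℝ≥0∞) := by
    rcases min_cases (i₁ * n₂) (i₂ * n₁) with ⟨he, _⟩ | ⟨he, _⟩ <;> rw [hm_def, he]
    · exact hr₁'
    · exact hr₂'
  -- key divisibility for all N
  have key : ∀ N : ℕ, α ^ (m * (N / n) - m) ∣ (x + y) ^ N := by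
    intro N
    rw [add_pow]
    apply Finset.dvd_sum
    intro t ht
    have h1 : α ^ (m * (t / n)) ∣ x ^ t := floor_dvd (hd₁''.trans hd₁') t
    have h2 : α ^ (m * ((N - t) / n)) ∣ y ^ (N - t) := floor_dvd (hd₂''.trans hd₂') (N - t)
    have h3 : α ^ (m * (t / n) + m * ((N - t) / n)) ∣ x ^ t * y ^ (N - t) :=
      (pow_add α _ _) ▸ mul_dvd_mul h1 h2
    have h4 : m * (N / n) - m ≤ m * (t / n) + m * ((N - t) / n) := by
      have ht' : t ≤ N := by
        simpa using Nat.lt_succ_iff.mp (Finset.mem_range.mp ht)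
      have h5 : N / n ≤ t / n + (N - t) / n + 1 := by
        have := nat_div_add_div (a := t) (b := N - t) hn
        rwa [Nat.add_sub_cancel' ht'] at this
      calc m * (N / n) - m ≤ m * (t / n + (N - t) / n + 1) - m := by
            apply Nat.sub_le_sub_right
            exact Nat.mul_le_mul_left m h5
        _ = m * (t / n) + m * ((N - t) / n) := by
            have : m * (t / n + (N - t) / n + 1) = m * (t / n) + m * ((N - t) / n) + m := by ring
            omega
      
    exact ((pow_dvd_pow α h4).trans h3).mul_right _
  -- conclude
  have hslope : ∀ N : ℕ, 0 < N → ((m * (N / n) - m : ℕ) : ℝ≥0∞) / (N : ℝ≥0∞) ≤ slope α (x + y) :=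
    fun N hN => slope_ge_of_dvd hN (key N)
  -- choose N := n * M with M large
  -- from hrm : r * n < m  (in ℝ≥0)
  have hmn : (r : ℝ≥0∞) * n < m := by
    rw [ENNReal.lt_div_iff_mul_lt (Or.inl (by exact_mod_cast hn.ne')) (Or.inl (ENNReal.natCast_ne_top n))] at hrm
    exact hrm
  have hmn' : r * (n : ℝ≥0) < (m : ℝ≥0) := by exact_mod_cast hmn
  have hrr : (r : ℝ) * (n : ℝ) < (m : ℝ) := by exact_mod_cast hmn'
  have hδ0 : (0 : ℝ) < (m : ℝ) - r * n := by linarith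
  obtain ⟨M₀, hM₀⟩ := exists_nat_ge ((m : ℝ) / ((m : ℝ) - r * n))
  have hMδ : (m : ℝ) ≤ (M₀ + 1 : ℝ) * ((m : ℝ) - r * n) := by
    have h2 : (m : ℝ) = ((m : ℝ) / ((m : ℝ) - r * n)) * ((m : ℝ) - r * n) := by field_simp
    nlinarith
  have hN : 0 < n * (M₀ + 1) := Nat.mul_pos hn (by omega)
  have hdiv : (n * (M₀ + 1)) / n = M₀ + 1 := Nat.mul_div_cancel_left _ hn
  have hexp : m * ((n * (M₀ + 1)) / n) - m = m * M₀ := by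
    rw [hdiv]
    have h2 : m * (M₀ + 1) = m * M₀ + m := Nat.mul_succ m M₀
    omega
  have hfin := hslope (n * (M₀ + 1)) hN
  rw [hexp] at hfin
  refine le_trans ?_ hfin
  rw [ENNReal.le_div_iff_mul_le (Or.inl (by exact_mod_cast hN.ne'))
    (Or.inl (ENNReal.natCast_ne_top _))]
  have goal_r : (r : ℝ) * ((n * (M₀ + 1) : ℕ) : ℝ) ≤ ((m * M₀ : ℕ) : ℝ) := by
    push_cast
    nlinarith
  have goal_nn : r * ((n * (M₀ + 1) : ℕ) : ℝ≥0) ≤ ((m * M₀ : ℕ) : ℝ≥0) := by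
    rw [← NNReal.coe_le_coe]
    push_cast
    push_cast at goal_r
    linarith
  exact_mod_cast goal_nn

lemma slope_finset_sum {ι : Type*} {α : D} {c : ℝ≥0∞} {s : Finset ι} {f : ι → D}
    (h : ∀ i ∈ s, c ≤ slope α (f i)) : c ≤ slope α (∑ i ∈ s, f i) := by
  classical
  induction s using Finset.induction with
  | empty => simp [slope_zero]
  | insert _ _ hx ih =>
      rename_i a s'
      rw [Finset.sum_insert hx]
      exact slope_add (h _ (Finset.mem_insert_self a s'))
        (ih fun i hi => h i (Finset.mem_insert_of_mem hi))


section Graded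

variable {A : Type*} [CommRing A] (𝒜 : ℤ → AddSubgroup A) [GradedRing 𝒜]

lemma proj_mul_right {c w : A} {e δ : ℤ} (hw : w ∈ 𝒜 e) :
    (DirectSum.decompose 𝒜 (c * w) δ : A) = (DirectSum.decompose 𝒜 c (δ - e) : A) * w := by
  have h := DirectSum.coe_decompose_mul_add_of_right_mem 𝒜 (a := c) (i := δ - e) hw
  rwa [sub_add_cancel] at h

lemma exists_homog_cofactor {q : Ideal A} (hq : q.IsHomogeneous 𝒜) {s x : A} {e δ : ℤ}
    (hs : s ∈ 𝒜 e) (hx : x ∈ 𝒜 δ) (hmem : x ∈ q ⊔ Ideal.span {s}) :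
    ∃ c ∈ 𝒜 (δ - e), x - c * s ∈ q := by
  rw [Submodule.mem_sup] at hmem
  obtain ⟨r, hr, t, ht, hrt⟩ := hmem
  rw [Ideal.mem_span_singleton'] at ht
  obtain ⟨c₀, hc₀⟩ := ht
  refine ⟨(DirectSum.decompose 𝒜 c₀ (δ - e) : A), SetLike.coe_mem _, ?_⟩
  have h1 : (DirectSum.decompose 𝒜 x δ : A) = x := DirectSum.decompose_of_mem_same 𝒜 hx
  have h2 : x = r + c₀ * s := by rw [← hrt, hc₀]
  have h3 : (DirectSum.decompose 𝒜 x δ : A) =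
      (DirectSum.decompose 𝒜 r δ : A) + (DirectSum.decompose 𝒜 (c₀ * s) δ : A) := by
    rw [h2, DirectSum.decompose_add, DirectSum.add_apply, AddSubgroup.coe_add]
  have h4 := proj_mul_right 𝒜 (c := c₀) (δ := δ) hs
  have h5 : (DirectSum.decompose 𝒜 r δ : A) ∈ q := hq δ hr
  have h6 : x - (DirectSum.decompose 𝒜 c₀ (δ - e) : A) * s = (DirectSum.decompose 𝒜 r δ : A) := by
    rw [← h4, ← h1, h3]; ring
  rw [h6]; exact h5

end Graded

end Stmt13

/-- A good noetherian local graded ring (a `ℤ`-graded commutative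
noetherian ring with a unique maximal homogeneous ideal) is either quasi-standard or
quasi-trivial. -/
theorem stmt_13 {A : Type*} [CommRing A] [IsNoetherianRing A]
    (𝒜 : ℤ → AddSubgroup A) [GradedRing 𝒜]
    (hlocal : ∃ m : Ideal A, m ≠ ⊤ ∧ m.IsHomogeneous 𝒜 ∧
      ∀ I : Ideal A, I.IsHomogeneous 𝒜 → I ≠ ⊤ → I ≤ m)
    (hgood : ∀ p : Ideal A, p.IsPrime → p.IsHomogeneous 𝒜 →
      ∀ d : ℤ, ((∀ a ∈ 𝒜 d, a ∈ p) ↔ (∀ a ∈ 𝒜 (-d), a ∈ p))) :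
    (∃ d : ℤ, 0 < d ∧ ∃ a ∈ 𝒜 d, IsUnit a) ∨
    (∀ d : ℤ, d ≠ 0 → ∀ a ∈ 𝒜 d, IsNilpotent a) := by
  classical
  obtain ⟨m, hmtop, hmhom, hmmax⟩ := hlocal
  by_cases hqs : ∃ d : ℤ, 0 < d ∧ ∃ a ∈ 𝒜 d, IsUnit a
  · exact Or.inl hqs
  right
  push_neg at hqs
  intro d₀ hd₀ a₀ ha₀
  by_contra hnil
  -- Step 1 : homogeneous elements of nonzero degree are in m
  have hin_m : ∀ e : ℤ, e ≠ 0 → ∀ x, x ∈ 𝒜 e → x ∈ m := by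
    intro e he x hx
    by_contra hxm
    have hxu : IsUnit x := by
      by_contra hxu
      refine hxm ?_
      have hsp : (Ideal.span {x}).IsHomogeneous 𝒜 :=
        Ideal.homogeneous_span 𝒜 {x} (by rintro y rfl; exact ⟨e, hx⟩)
      have hne : Ideal.span {x} ≠ ⊤ := fun htop => hxu (Ideal.span_singleton_eq_top.mp htop)
      exact hmmax _ hsp hne (Ideal.mem_span_singleton_self x)
    rcases lt_or_gt_of_ne he with hneg | hpos
    · obtain ⟨u, hu⟩ := hxu.exists_right_inv
      have h2 := DirectSum.coe_decompose_mul_add_of_left_mem 𝒜 (b := u) (j := -e) hx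
      rw [hu, add_neg_cancel] at h2
      have h3 : (DirectSum.decompose 𝒜 (1 : A) 0 : A) = 1 :=
        DirectSum.decompose_of_mem_same 𝒜 (SetLike.one_mem_graded 𝒜)
      rw [h3] at h2
      refine hqs (-e) (by omega) (DirectSum.decompose 𝒜 u (-e) : A) (SetLike.coe_mem _) ?_
      exact IsUnit.of_mul_eq_one x (by rw [mul_comm]; exact h2.symm)
    · exact hqs e hpos x hx hxu
  -- Step 2 : homogeneous prime avoiding a₀
  have hq₀ : ∃ q₀ : Ideal A, q₀.IsPrime ∧ q₀.IsHomogeneous 𝒜 ∧ a₀ ∉ q₀ := by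
    have h1 : ¬ ∀ J : Ideal A, J.IsPrime → a₀ ∈ J := fun h => hnil (nilpotent_iff_mem_prime.mpr h)
    push_neg at h1
    obtain ⟨p, hp, hap⟩ := h1
    exact ⟨(p.homogeneousCore 𝒜).toIdeal, hp.homogeneousCore (𝒜 := 𝒜),
      (p.homogeneousCore 𝒜).isHomogeneous,
      fun h => hap (Ideal.toIdeal_homogeneousCore_le 𝒜 p h)⟩
  obtain ⟨q₀, hq₀p, hq₀h, hq₀a⟩ := hq₀
  -- Step 3 : maximal bad homogeneous prime
  obtain ⟨q, hqS, hqmax⟩ := (set_has_maximal_iff_noetherian.mpr inferInstance)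
    {I : Ideal A | I.IsPrime ∧ I.IsHomogeneous 𝒜 ∧ ∃ e : ℤ, e ≠ 0 ∧ ∃ x ∈ 𝒜 e, x ∉ I}
    ⟨q₀, hq₀p, hq₀h, d₀, hd₀, a₀, ha₀, hq₀a⟩
  obtain ⟨hqp, hqh, e₁, he₁, x₁, hx₁m, hx₁q⟩ := hqS
  have hqm : q ≤ m := hmmax q hqh hqp.ne_top
  -- Step 4 : good gives a, b of degrees d, -d outside q
  have hab : ∃ d : ℤ, 0 < d ∧ ∃ a, a ∈ 𝒜 d ∧ a ∉ q ∧ ∃ b, b ∈ 𝒜 (-d) ∧ b ∉ q := by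
    have hgq := hgood q hqp hqh e₁
    have hnot : ¬ ∀ y ∈ 𝒜 e₁, y ∈ q := fun h => hx₁q (h x₁ hx₁m)
    have hnot2 : ¬ ∀ y ∈ 𝒜 (-e₁), y ∈ q := fun h => hnot (hgq.mpr h)
    push_neg at hnot2
    obtain ⟨y, hy, hyq⟩ := hnot2
    rcases lt_or_gt_of_ne he₁ with hneg | hpos
    · refine ⟨-e₁, by omega, y, hy, hyq, x₁, ?_, hx₁q⟩
      rwa [neg_neg]
    · exact ⟨e₁, hpos, x₁, hx₁m, hx₁q, y, hy, hyq⟩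
  obtain ⟨d, hd, a, ha, haq, b, hb, hbq⟩ := hab
  have ham : a ∈ m := hin_m d (by omega) a ha
  -- Step 5 : homogeneous primes strictly above q contain all nonzero degrees
  have habove : ∀ P : Ideal A, P.IsPrime → P.IsHomogeneous 𝒜 → q < P →
      ∀ e : ℤ, e ≠ 0 → ∀ x, x ∈ 𝒜 e → x ∈ P := by
    intro P hP hPh hqP e he x hx
    by_contra hxP
    exact hqmax P ⟨hP, hPh, e, he, x, hx, hxP⟩ hqP
  -- Step 6 : radical lemma
  have hrad : ∀ s : A, (∃ es : ℤ, s ∈ 𝒜 es) → s ∉ q →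
      ∀ y, (∃ e : ℤ, e ≠ 0 ∧ y ∈ 𝒜 e) → ∃ k : ℕ, y ^ k ∈ q ⊔ Ideal.span {s} := by
    intro s hs hsq y hy
    obtain ⟨es, hses⟩ := hs
    have hKhom : Ideal.IsHomogeneous 𝒜 (q ⊔ Ideal.span {s}) :=
      hqh.sup (Ideal.homogeneous_span 𝒜 {s} (by rintro z rfl; exact ⟨es, hses⟩))
    have hmem : y ∈ Ideal.radical (q ⊔ Ideal.span {s}) := by
      rw [hKhom.radical_eq, Ideal.mem_sInf]
      rintro J ⟨hJh, hKJ, hJp⟩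
      have hsJ : s ∈ J := hKJ (Ideal.mem_sup_right (Ideal.mem_span_singleton_self s))
      have hqJ : q < J := by
        refine lt_of_le_of_ne (le_trans le_sup_left hKJ) ?_
        rintro rfl
        exact hsq hsJ
      obtain ⟨e, he0, hye⟩ := hy
      exact habove J hJp hJh hqJ e he0 y hye
    exact hmem
  -- Step 7 : finite homogeneous generating set of the irrelevant ideal
  have hWex : ∃ W : Finset A, (↑W : Set A) ⊆ {x : A | ∃ e : ℤ, e ≠ 0 ∧ x ∈ 𝒜 e} ∧
      Ideal.span {x : A | ∃ e : ℤ, e ≠ 0 ∧ x ∈ 𝒜 e} ≤ Ideal.span (↑W : Set A) := by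
    set S₀ : Set A := {x : A | ∃ e : ℤ, e ≠ 0 ∧ x ∈ 𝒜 e} with hS₀
    obtain ⟨T, hT⟩ := (isNoetherian_def.mp inferInstance) (Ideal.span S₀)
    have hTsub : ∀ t : A, ∃ F : Finset A, t ∈ T →
        ((↑F : Set A) ⊆ S₀ ∧ t ∈ Ideal.span (↑F : Set A)) := by
      intro t
      by_cases ht : t ∈ T
      · have htS : t ∈ Ideal.span S₀ := by
          rw [← hT]
          exact Ideal.subset_span ht
        obtain ⟨F, hF1, hF2⟩ := Submodule.mem_span_finite_of_mem_span htS
        exact ⟨F, fun _ => ⟨hF1, hF2⟩⟩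
      · exact ⟨∅, fun h => absurd h ht⟩
    choose F hF using hTsub
    refine ⟨T.biUnion F, ?_, ?_⟩
    · intro w hw
      simp only [Finset.coe_biUnion, Set.mem_iUnion, Finset.mem_coe] at hw
      obtain ⟨t, ht, hwF⟩ := hw
      exact (hF t ht).1 hwF
    · rw [← hT]
      rw [Submodule.span_le]
      intro t ht
      have h1 : t ∈ Ideal.span (↑(F t) : Set A) := (hF t ht).2
      have h2 : Ideal.span (↑(F t) : Set A) ≤ Ideal.span (↑(T.biUnion F) : Set A) := by
        apply Ideal.span_mono
        intro z hz
        simp only [Finset.coe_biUnion, Set.mem_iUnion, Finset.mem_coe]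
        exact ⟨t, ht, hz⟩
      exact h2 h1
  obtain ⟨W, hWS, hWspan⟩ := hWex
  have hdegex : ∀ w : A, ∃ e : ℤ, w ∈ W → (e ≠ 0 ∧ w ∈ 𝒜 e) := by
    intro w
    by_cases hw : w ∈ W
    · obtain ⟨e, he, hmem⟩ := hWS hw
      exact ⟨e, fun _ => ⟨he, hmem⟩⟩
    · exact ⟨1, fun h => absurd h hw⟩
  choose deg hdeg using hdegex
  -- Step 8 : the quotient domain and basic facts
  haveI : Ideal.IsPrime q := hqp
  set π : A →+* A ⧸ q := Ideal.Quotient.mk q with hπ_def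
  set α : A ⧸ q := π a with hα_def
  have hα0 : α ≠ 0 := by
    simpa [hα_def, hπ_def, Ideal.Quotient.eq_zero_iff_mem] using haq
  have hαnu : ¬ IsUnit α := by
    intro hu
    obtain ⟨v, hv⟩ := hu.exists_right_inv
    obtain ⟨c, rfl⟩ := Ideal.Quotient.mk_surjective v
    have h0 : π (a * c - 1) = 0 := by
      rw [map_sub, map_mul, map_one]
      rw [hα_def] at hv
      rw [hv, sub_self]
    have h1 : a * c - 1 ∈ q := Ideal.Quotient.eq_zero_iff_mem.mp h0
    have h2 : a * c - 1 ∈ m := hqm h1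
    have h3 : a * c ∈ m := Ideal.mul_mem_right c m ham
    have h4 : (1 : A) ∈ m := by
      have : (1 : A) = a * c - (a * c - 1) := by ring
      rw [this]
      exact Submodule.sub_mem m h3 h2
    exact hmtop (Ideal.eq_top_iff_one m |>.mpr h4)
  have hπrel : ∀ x c s : A, x - c * s ∈ q → π x = π c * π s := by
    intro x c s h
    have h0 : π (x - c * s) = 0 := Ideal.Quotient.eq_zero_iff_mem.mpr h
    rw [map_sub, sub_eq_zero, map_mul] at h0
    exact h0
  -- slope function
  set ν : A → ℝ≥0∞ := fun x => Stmt13.slope α (π x) with hν_def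
  -- Step 9 : slope of each generator is positive ; the minimum ε
  have hwpos : ∀ w ∈ W, 0 < ν w := by
    intro w hw
    obtain ⟨hdw, hwm⟩ := hdeg w hw
    obtain ⟨k, hk⟩ := hrad a ⟨d, ha⟩ haq w ⟨deg w, hdw, hwm⟩
    have hk1 : 0 < k := by
      rcases Nat.eq_zero_or_pos k with rfl | h
      · exfalso
        rw [pow_zero] at hk
        have hKm : q ⊔ Ideal.span {a} ≤ m := by
          refine sup_le hqm ?_
          rw [Ideal.span_le]
          rintro z rfl
          exact ham
        exact hmtop (Ideal.eq_top_iff_one m |>.mpr (hKm hk))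
      · exact h
    -- extract divisibility
    rw [Submodule.mem_sup] at hk
    obtain ⟨r, hr, t, ht, hrt⟩ := hk
    rw [Ideal.mem_span_singleton'] at ht
    obtain ⟨c₀, hc₀⟩ := ht
    have hrel : w ^ k - c₀ * a ∈ q := by
      have : w ^ k - c₀ * a = r := by rw [← hrt, hc₀]; ring
      rw [this]; exact hr
    have hdvd : α ^ 1 ∣ (π w) ^ k := by
      rw [pow_one, ← map_pow]
      exact ⟨π c₀, by rw [hπrel _ _ _ hrel, mul_comm]⟩
    have h5 := Stmt13.slope_ge_of_dvd hk1 hdvd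
    refine lt_of_lt_of_le ?_ h5
    apply ENNReal.div_pos
    · simp
    · exact ENNReal.natCast_ne_top k
  set ε : ℝ≥0∞ := W.inf ν with hε_def
  have hε : 0 < ε := by
    rw [hε_def, Finset.lt_inf_iff (show (0:ℝ≥0∞) < ⊤ by simp)]
    exact hwpos
  have hεle : ∀ w ∈ W, ε ≤ ν w := fun w hw => Finset.inf_le hw
  -- Step 10 : γ, the minimal negative slope ratio
  set Wneg : Finset A := W.filter (fun w => deg w < 0) with hWn_def
  set γ : ℝ≥0∞ := Wneg.inf (fun w => ν w / (((-(deg w)).toNat : ℕ) : ℝ≥0∞)) with hγ_def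
  have hγw : ∀ w ∈ W, deg w < 0 → γ * ((((-(deg w)).toNat : ℕ)) : ℝ≥0∞) ≤ ν w := by
    intro w hw hwneg
    have hmemf : w ∈ Wneg := by
      rw [hWn_def, Finset.mem_filter]
      exact ⟨hw, hwneg⟩
    have h1 : γ ≤ ν w / (((-(deg w)).toNat : ℕ) : ℝ≥0∞) := by
      rw [hγ_def]
      exact Finset.inf_le hmemf
    have hnz : (((-(deg w)).toNat : ℕ) : ℝ≥0∞) ≠ 0 := by
      have : 0 < (-(deg w)).toNat := by omega
      exact_mod_cast this.ne'
    have hnt : (((-(deg w)).toNat : ℕ) : ℝ≥0∞) ≠ ⊤ := ENNReal.natCast_ne_top _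
    calc γ * (((-(deg w)).toNat : ℕ) : ℝ≥0∞)
        ≤ (ν w / (((-(deg w)).toNat : ℕ) : ℝ≥0∞)) * (((-(deg w)).toNat : ℕ) : ℝ≥0∞) := by gcongr
      _ = ν w := ENNReal.div_mul_cancel hnz hnt
  -- Step 11 : decomposition of homogeneous elements of nonzero degree
  have hdecomp : ∀ x : A, ∀ δ : ℤ, δ ≠ 0 → x ∈ 𝒜 δ →
      ∃ c : A → A, (∀ w ∈ W, c w ∈ 𝒜 (δ - deg w)) ∧ x = ∑ w ∈ W, c w * w := by
    intro x δ hδ hx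
    have hxI : x ∈ Ideal.span (↑W : Set A) := hWspan (Ideal.subset_span ⟨δ, hδ, hx⟩)
    have hxI' : x ∈ Submodule.span A (↑W : Set A) := hxI
    rw [Submodule.mem_span_finset] at hxI'
    obtain ⟨f, -, hf⟩ := hxI'
    refine ⟨fun w => (DirectSum.decompose 𝒜 (f w) (δ - deg w) : A),
      fun w _ => SetLike.coe_mem _, ?_⟩
    have h1 : x = (DirectSum.decompose 𝒜 x δ : A) := (DirectSum.decompose_of_mem_same 𝒜 hx).symm
    have h2 : (DirectSum.decompose 𝒜 x δ : A) =
        ∑ w ∈ W, (DirectSum.decompose 𝒜 (f w * w) δ : A) := by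
      have h3 : x = ∑ w ∈ W, f w * w := by
        rw [← hf]
        exact Finset.sum_congr rfl (fun w _ => (smul_eq_mul _ _).symm)
      rw [h3, DirectSum.decompose_sum, DFinsupp.finset_sum_apply, AddSubmonoidClass.coe_finset_sum]
    have h4 : ∀ w ∈ W, (DirectSum.decompose 𝒜 (f w * w) δ : A) =
        (DirectSum.decompose 𝒜 (f w) (δ - deg w) : A) * w := fun w hw =>
      Stmt13.proj_mul_right 𝒜 ((hdeg w hw).2)
    rw [h1, h2]
    exact Finset.sum_congr rfl h4
  -- Step 12 : Claim C with cutoff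
  have claimCn : ∀ n : ℕ, ∀ δ : ℤ, δ < 0 → ∀ x, x ∈ 𝒜 δ →
      min (γ * ((((-δ).toNat : ℕ)) : ℝ≥0∞)) ((n : ℝ≥0∞) * ε) ≤ ν x := by
    intro n
    induction n with
    | zero =>
      intro δ hδ x hx
      calc min (γ * ((((-δ).toNat : ℕ)) : ℝ≥0∞)) (((0:ℕ) : ℝ≥0∞) * ε)
          ≤ ((0:ℕ) : ℝ≥0∞) * ε := min_le_right _ _
        _ = 0 := by simp
        _ ≤ ν x := zero_le
    | succ n ih =>
      intro δ hδ x hx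
      obtain ⟨c, hc, hxeq⟩ := hdecomp x δ (by omega) hx
      have hπx : π x = ∑ w ∈ W, π (c w) * π w := by
        rw [hxeq, map_sum]
        exact Finset.sum_congr rfl (fun w _ => map_mul π _ _)
      have hνx : ν x = Stmt13.slope α (π x) := rfl
      rw [hνx, hπx]
      apply Stmt13.slope_finset_sum
      intro w hw
      refine le_trans ?_ (Stmt13.slope_mul_le α (π (c w)) (π w))
      obtain ⟨hdw0, hdwm⟩ := hdeg w hw
      have hεw : ε ≤ Stmt13.slope α (π w) := hεle w hw
      have hsucc : (((n+1 : ℕ)) : ℝ≥0∞) * ε = (n : ℝ≥0∞) * ε + ε := by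
        push_cast; ring
      rcases lt_trichotomy (δ - deg w) 0 with hcneg | hczero | hcpos
      · have hihc := ih (δ - deg w) hcneg (c w) (hc w hw)
        rcases lt_trichotomy (deg w) 0 with hwneg | hwzero | hwpos
        · have hγwle : γ * ((((-(deg w)).toNat : ℕ)) : ℝ≥0∞) ≤ Stmt13.slope α (π w) :=
            hγw w hw hwneg
          rcases min_cases (γ * ((((-(δ - deg w)).toNat : ℕ)) : ℝ≥0∞)) ((n : ℝ≥0∞) * ε) with
            ⟨hmin, _⟩ | ⟨hmin, _⟩
          · rw [hmin] at hihc
            have hsplit : ((((-δ).toNat : ℕ)) : ℝ≥0∞) ≤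
                ((((-(δ - deg w)).toNat : ℕ)) : ℝ≥0∞) + ((((-(deg w)).toNat : ℕ)) : ℝ≥0∞) := by
              have h9 : (-δ).toNat ≤ (-(δ - deg w)).toNat + (-(deg w)).toNat := by omega
              exact_mod_cast h9
            calc min (γ * ((((-δ).toNat : ℕ)) : ℝ≥0∞)) ((((n+1:ℕ)) : ℝ≥0∞) * ε)
                ≤ γ * ((((-δ).toNat : ℕ)) : ℝ≥0∞) := min_le_left _ _
              _ ≤ γ * (((((-(δ - deg w)).toNat : ℕ)) : ℝ≥0∞) +
                    ((((-(deg w)).toNat : ℕ)) : ℝ≥0∞)) := by gcongr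
              _ = γ * ((((-(δ - deg w)).toNat : ℕ)) : ℝ≥0∞) +
                    γ * ((((-(deg w)).toNat : ℕ)) : ℝ≥0∞) := mul_add _ _ _
              _ ≤ Stmt13.slope α (π (c w)) + Stmt13.slope α (π w) := add_le_add hihc hγwle
          · rw [hmin] at hihc
            calc min (γ * ((((-δ).toNat : ℕ)) : ℝ≥0∞)) ((((n+1:ℕ)) : ℝ≥0∞) * ε)
                ≤ (((n+1:ℕ)) : ℝ≥0∞) * ε := min_le_right _ _
              _ = (n : ℝ≥0∞) * ε + ε := hsucc
              _ ≤ Stmt13.slope α (π (c w)) + Stmt13.slope α (π w) := add_le_add hihc hεw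
        · exact absurd hwzero hdw0
        · rcases min_cases (γ * ((((-(δ - deg w)).toNat : ℕ)) : ℝ≥0∞)) ((n : ℝ≥0∞) * ε) with
            ⟨hmin, _⟩ | ⟨hmin, _⟩
          · rw [hmin] at hihc
            have hge : ((((-δ).toNat : ℕ)) : ℝ≥0∞) ≤ ((((-(δ - deg w)).toNat : ℕ)) : ℝ≥0∞) := by
              have h9 : (-δ).toNat ≤ (-(δ - deg w)).toNat := by omega
              exact_mod_cast h9
            calc min (γ * ((((-δ).toNat : ℕ)) : ℝ≥0∞)) ((((n+1:ℕ)) : ℝ≥0∞) * ε)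
                ≤ γ * ((((-δ).toNat : ℕ)) : ℝ≥0∞) := min_le_left _ _
              _ ≤ γ * ((((-(δ - deg w)).toNat : ℕ)) : ℝ≥0∞) := by gcongr
              _ ≤ Stmt13.slope α (π (c w)) := hihc
              _ ≤ Stmt13.slope α (π (c w)) + Stmt13.slope α (π w) := le_self_add
          · rw [hmin] at hihc
            calc min (γ * ((((-δ).toNat : ℕ)) : ℝ≥0∞)) ((((n+1:ℕ)) : ℝ≥0∞) * ε)
                ≤ (((n+1:ℕ)) : ℝ≥0∞) * ε := min_le_right _ _
              _ = (n : ℝ≥0∞) * ε + ε := hsucc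
              _ ≤ Stmt13.slope α (π (c w)) + Stmt13.slope α (π w) := add_le_add hihc hεw
      · have hwδ : deg w = δ := by omega
        have hγwle := hγw w hw (by omega)
        rw [hwδ] at hγwle
        calc min (γ * ((((-δ).toNat : ℕ)) : ℝ≥0∞)) ((((n+1:ℕ)) : ℝ≥0∞) * ε)
            ≤ γ * ((((-δ).toNat : ℕ)) : ℝ≥0∞) := min_le_left _ _
          _ ≤ Stmt13.slope α (π w) := hγwle
          _ ≤ Stmt13.slope α (π (c w)) + Stmt13.slope α (π w) := le_add_self
      · have hwneg : deg w < 0 := by omega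
        have hγwle := hγw w hw hwneg
        have hge : ((((-δ).toNat : ℕ)) : ℝ≥0∞) ≤ ((((-(deg w)).toNat : ℕ)) : ℝ≥0∞) := by
          have h9 : (-δ).toNat ≤ (-(deg w)).toNat := by omega
          exact_mod_cast h9
        calc min (γ * ((((-δ).toNat : ℕ)) : ℝ≥0∞)) ((((n+1:ℕ)) : ℝ≥0∞) * ε)
            ≤ γ * ((((-δ).toNat : ℕ)) : ℝ≥0∞) := min_le_left _ _
          _ ≤ γ * ((((-(deg w)).toNat : ℕ)) : ℝ≥0∞) := by gcongr
          _ ≤ Stmt13.slope α (π w) := hγwle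
          _ ≤ Stmt13.slope α (π (c w)) + Stmt13.slope α (π w) := le_add_self
  -- Step 13 : Claim C
  have claimC : ∀ δ : ℤ, δ < 0 → ∀ x, x ∈ 𝒜 δ →
      γ * ((((-δ).toNat : ℕ)) : ℝ≥0∞) ≤ ν x := by
    intro δ hδ x hx
    by_cases hτ : ν x = ⊤
    · rw [hτ]; exact le_top
    by_contra hlt
    push_neg at hlt
    have hall : ∀ n : ℕ, (n : ℝ≥0∞) * ε ≤ ν x := by
      intro n
      have h1 := claimCn n δ hδ x hx
      rcases min_cases (γ * ((((-δ).toNat : ℕ)) : ℝ≥0∞)) ((n : ℝ≥0∞) * ε) with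
        ⟨hmin, _⟩ | ⟨hmin, _⟩
      · rw [hmin] at h1
        exact absurd (lt_of_le_of_lt h1 hlt) (lt_irrefl _)
      · rw [hmin] at h1
        exact h1
    apply hτ
    by_cases hεtop : ε = ⊤
    · have h1 := hall 1
      rw [hεtop] at h1
      simp only [Nat.cast_one, one_mul] at h1
      exact top_le_iff.mp h1
    · have hn : ∀ n : ℕ, (n : ℝ≥0∞) ≤ ν x / ε := by
        intro n
        rw [ENNReal.le_div_iff_mul_le (Or.inl hε.ne') (Or.inl hεtop)]
        exact hall n
      have hdivtop : ν x / ε = ⊤ := Stmt13.ennreal_eq_top_of_nat_le hn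
      rcases ENNReal.div_eq_top.mp hdivtop with ⟨_, h0⟩ | ⟨h1, _⟩
      · exact absurd h0 hε.ne'
      · exact h1
  -- Step 14 : slope of b is finite
  have hbfin : ν b ≠ ⊤ := by
    obtain ⟨k, hk⟩ := hrad b ⟨-d, hb⟩ hbq a ⟨d, by omega, ha⟩
    rw [Submodule.mem_sup] at hk
    obtain ⟨r, hr, t, ht, hrt⟩ := hk
    rw [Ideal.mem_span_singleton'] at ht
    obtain ⟨c₀, hc₀⟩ := ht
    have hrel : a ^ k - c₀ * b ∈ q := by
      have : a ^ k - c₀ * b = r := by rw [← hrt, hc₀]; ring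
      rw [this]; exact hr
    have hdvd : π b ∣ α ^ k := by
      rw [hα_def, ← map_pow]
      exact ⟨π c₀, by rw [hπrel _ _ _ hrel, mul_comm]⟩
    have h5 := Stmt13.slope_le_of_dvd_pow hα0 hαnu hdvd
    intro htop
    rw [hν_def] at htop
    simp only at htop
    rw [htop] at h5
    exact (ENNReal.natCast_ne_top k) (top_le_iff.mp h5)
  -- Step 15 : endgame
  have hbν : γ * ((d.toNat : ℕ) : ℝ≥0∞) ≤ ν b := by
    have h1 := claimC (-d) (by omega) b hb
    have h2 : (-(-d)).toNat = d.toNat := by omega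
    rwa [h2] at h1
  by_cases hγtop : γ = ⊤
  · apply hbfin
    rw [hγtop] at hbν
    have hdnz : ((d.toNat : ℕ) : ℝ≥0∞) ≠ 0 := by
      have h9 : 0 < d.toNat := by omega
      exact_mod_cast h9.ne'
    rw [ENNReal.top_mul hdnz] at hbν
    exact top_le_iff.mp hbν
  · have hWneg_ne : Wneg.Nonempty := by
      rw [Finset.nonempty_iff_ne_empty]
      intro hempty
      apply hγtop
      rw [hγ_def, hempty, Finset.inf_empty]
    obtain ⟨w₀, hw₀mem, hw₀eq⟩ := Finset.exists_mem_eq_inf Wneg hWneg_ne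
      (fun w => ν w / ((((-(deg w)).toNat : ℕ)) : ℝ≥0∞))
    rw [hWn_def, Finset.mem_filter] at hw₀mem
    obtain ⟨hw₀W, hw₀neg⟩ := hw₀mem
    have hδ₀nz : ((((-(deg w₀)).toNat : ℕ)) : ℝ≥0∞) ≠ 0 := by
      have h9 : 0 < (-(deg w₀)).toNat := by omega
      exact_mod_cast h9.ne'
    have hδ₀nt : ((((-(deg w₀)).toNat : ℕ)) : ℝ≥0∞) ≠ ⊤ := ENNReal.natCast_ne_top _
    have hγeq : γ = ν w₀ / ((((-(deg w₀)).toNat : ℕ)) : ℝ≥0∞) := by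
      rw [hγ_def]; exact hw₀eq
    have hσ : ν w₀ = γ * ((((-(deg w₀)).toNat : ℕ)) : ℝ≥0∞) := by
      rw [hγeq, ENNReal.div_mul_cancel hδ₀nz hδ₀nt]
    have hσfin : ν w₀ ≠ ⊤ := by
      rw [hσ]
      exact ENNReal.mul_ne_top hγtop hδ₀nt
    obtain ⟨k, hk⟩ := hrad a ⟨d, ha⟩ haq w₀ ⟨deg w₀, by omega, (hdeg w₀ hw₀W).2⟩
    have hk1 : 0 < k := by
      rcases Nat.eq_zero_or_pos k with rfl | h
      · exfalso
        rw [pow_zero] at hk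
        have hKm : q ⊔ Ideal.span {a} ≤ m := by
          refine sup_le hqm ?_
          rw [Ideal.span_le]
          rintro z rfl
          exact ham
        exact hmtop (Ideal.eq_top_iff_one m |>.mpr (hKm hk))
      · exact h
    have hpowmem : w₀ ^ k ∈ 𝒜 (k • deg w₀) := SetLike.pow_mem_graded k (hdeg w₀ hw₀W).2
    obtain ⟨c, hcm, hcq⟩ := Stmt13.exists_homog_cofactor 𝒜 hqh ha hpowmem hk
    have hsmul : k • deg w₀ = (k : ℤ) * deg w₀ := by
      simp [nsmul_eq_mul]
    have hcm' : c ∈ 𝒜 ((k : ℤ) * deg w₀ - d) := by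
      rw [← hsmul]; exact hcm
    have hkz : (0:ℤ) < (k:ℤ) := by exact_mod_cast hk1
    have hcdeg : (k : ℤ) * deg w₀ - d < 0 := by
      nlinarith [hw₀neg, hd]
    have hνc := claimC ((k : ℤ) * deg w₀ - d) hcdeg c hcm'
    have hπw : (π (w₀ ^ k) : A ⧸ q) = π c * α := by
      exact hπrel _ _ _ hcq
    have hslope_pow : Stmt13.slope α ((π w₀) ^ k) = (k : ℝ≥0∞) * ν w₀ :=
      Stmt13.slope_pow hk1
    have hge2 : Stmt13.slope α (π c) + Stmt13.slope α α ≤ (k : ℝ≥0∞) * ν w₀ := by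
      rw [← hslope_pow, ← map_pow, hπw]
      exact Stmt13.slope_mul_le α (π c) α
    have hαone : (1 : ℝ≥0∞) ≤ Stmt13.slope α α := Stmt13.one_le_slope_self α
    have hd0 : ((d.toNat : ℤ)) = d := Int.toNat_of_nonneg (by omega)
    have ht0 : ((((-(deg w₀)).toNat : ℕ)) : ℤ) = -(deg w₀) := Int.toNat_of_nonneg (by omega)
    have hint : -((k : ℤ) * deg w₀ - d) = ((k * (-(deg w₀)).toNat + d.toNat : ℕ) : ℤ) := by
      push_cast [ht0, hd0]
      ring
    have hnat : (-((k : ℤ) * deg w₀ - d)).toNat = k * (-(deg w₀)).toNat + d.toNat := by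
      rw [hint, Int.toNat_natCast]
    have hγc : γ * (((k * (-(deg w₀)).toNat + d.toNat : ℕ)) : ℝ≥0∞) ≤ Stmt13.slope α (π c) := by
      rw [hnat] at hνc
      exact hνc
    have hexp : γ * (((k * (-(deg w₀)).toNat + d.toNat : ℕ)) : ℝ≥0∞)
        = (k : ℝ≥0∞) * ν w₀ + γ * ((d.toNat : ℕ) : ℝ≥0∞) := by
      rw [hσ]
      push_cast
      ring
    have hfinal : (k : ℝ≥0∞) * ν w₀ + (γ * ((d.toNat : ℕ) : ℝ≥0∞) + 1) ≤ (k : ℝ≥0∞) * ν w₀ := by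
      calc (k : ℝ≥0∞) * ν w₀ + (γ * ((d.toNat : ℕ) : ℝ≥0∞) + 1)
          = γ * (((k * (-(deg w₀)).toNat + d.toNat : ℕ)) : ℝ≥0∞) + 1 := by
            rw [hexp]; ring
        _ ≤ Stmt13.slope α (π c) + Stmt13.slope α α := add_le_add hγc hαone
        _ ≤ (k : ℝ≥0∞) * ν w₀ := hge2
    have hkfin : (k : ℝ≥0∞) * ν w₀ ≠ ⊤ := ENNReal.mul_ne_top (ENNReal.natCast_ne_top k) hσfin
    have h0 : γ * ((d.toNat : ℕ) : ℝ≥0∞) + 1 ≤ 0 := by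
      refine ENNReal.le_of_add_le_add_left hkfin ?_
      simpa using hfinal
    simp at h0
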